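/- Let B be a connected graph that contains no independent set of three vertices and in which any two non-adjacent vertices have at most one common neighbor. Then B is a complete graph, a dumbbell, a short dumbbell, or a 5-cycle. -/

import Mathlib

/-- `D` is an orientation of the simple graph `G`: every arc lies on an edge of `G`,
and every edge of `G` gets exactly one direction. -/
def IsOrientation {V : Type*} (G : SimpleGraph V) (D : V → V → Prop) : Prop :=
  (∀ u v, D u v → G.Adj u v) ∧ (∀ u v, G.Adj u v → (D u v ↔ ¬ D v u))

/-- The directed distance from `u` to `v` in the digraph `D` is at most 2. -/
def DistLE2 {V : Type*} (D : V → V → Prop) (u v : V) : Prop :=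
  D u v ∨ ∃ w, D u w ∧ D w v

/-- `D` is an orientation of the subgraph of `G` induced by `W`. -/
def IsOrientationOn {V : Type*} (G : SimpleGraph V) (W : Set V) (D : V → V → Prop) : Prop :=
  (∀ u v, D u v → u ∈ W ∧ v ∈ W ∧ G.Adj u v) ∧
  (∀ u v, u ∈ W → v ∈ W → G.Adj u v → (D u v ↔ ¬ D v u))

/-- `B` is a complete graph. -/
def IsCompleteGraph {V : Type*} (B : SimpleGraph V) : Prop :=
  ∀ u v, u ≠ v → B.Adj u v

/-- `B` is a `(k,ℓ)`-dumbbell: two disjoint cliques joined by a single edge. -/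
def IsDumbbell {V : Type*} (B : SimpleGraph V) : Prop :=
  ∃ (K L : Set V) (x y : V), K ∪ L = Set.univ ∧ Disjoint K L ∧ x ∈ K ∧ y ∈ L ∧
    ∀ u v, B.Adj u v ↔ u ≠ v ∧
      ((u ∈ K ∧ v ∈ K) ∨ (u ∈ L ∧ v ∈ L) ∨ (u = x ∧ v = y) ∨ (u = y ∧ v = x))

/-- `B` is a short dumbbell: two cliques sharing exactly one vertex. -/
def IsShortDumbbell {V : Type*} (B : SimpleGraph V) : Prop :=
  ∃ (K L : Set V) (y : V), K ∪ L = Set.univ ∧ K ∩ L = {y} ∧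
    ∀ u v, B.Adj u v ↔ u ≠ v ∧ ((u ∈ K ∧ v ∈ K) ∨ (u ∈ L ∧ v ∈ L))

/-- `B` is a 5-cycle. -/
def IsFiveCycle {V : Type*} (B : SimpleGraph V) : Prop :=
  ∃ f : Fin 5 → V, Function.Bijective f ∧
    ∀ i j, B.Adj (f i) (f j) ↔ (j = i + 1 ∨ i = j + 1)

private lemma cross_edge {V : Type*} {G : SimpleGraph V} (K : Set V) :
    ∀ {u v : V}, G.Walk u v → u ∈ K → v ∉ K → ∃ x y, x ∈ K ∧ y ∉ K ∧ G.Adj x y := by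
  intro u v w
  induction w with
  | nil => exact fun h h' => absurd h h'
  | @cons a b c h p ih =>
    intro hu hv
    by_cases hm : b ∈ K
    · exact ih hm hv
    · exact ⟨a, b, hu, hm, h⟩

set_option maxHeartbeats 2000000 in
/-- A connected graph with no independent set of three vertices, in which any two
non-adjacent vertices have at most one common neighbor, is a complete graph, a dumbbell,
a short dumbbell, or a 5-cycle. -/
theorem stmt12 {V : Type*} [Fintype V] (B : SimpleGraph V) (hconn : B.Connected)
    (hind : ∀ x y z : V, x ≠ y → x ≠ z → y ≠ z →
      ¬ B.Adj x y → ¬ B.Adj x z → ¬ B.Adj y z → False)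
    (hcn : ∀ u v : V, u ≠ v → ¬ B.Adj u v →
      ∀ w₁ w₂, B.Adj u w₁ → B.Adj v w₁ → B.Adj u w₂ → B.Adj v w₂ → w₁ = w₂) :
    IsCompleteGraph B ∨ IsDumbbell B ∨ IsShortDumbbell B ∨ IsFiveCycle B := by
  classical
  by_cases hcomp : ∀ u v : V, u ≠ v → B.Adj u v
  · exact Or.inl hcomp
  push_neg at hcomp
  obtain ⟨a, b, hne, hab⟩ := hcomp
  have hba : ¬ B.Adj b a := fun h => hab h.symm
  have hclass0 : ∀ w, w ≠ a → w ≠ b → B.Adj a w ∨ B.Adj b w := by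
    intro w hwa hwb
    by_contra h
    push_neg at h
    exact hind a b w hne (Ne.symm hwa) (Ne.symm hwb) hab h.1 h.2
  have hAcl : ∀ u v, B.Adj a u → ¬ B.Adj b u → B.Adj a v → ¬ B.Adj b v → u ≠ v → B.Adj u v := by
    intro u v hau hbu hav hbv huv
    by_contra h
    exact hind u v b huv (fun e => hab (e ▸ hau)) (fun e => hab (e ▸ hav)) h
      (fun h' => hbu h'.symm) (fun h' => hbv h'.symm)
  have hBcl : ∀ u v, B.Adj b u → ¬ B.Adj a u → B.Adj b v → ¬ B.Adj a v → u ≠ v → B.Adj u v := by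
    intro u v hbu hau hbv hav huv
    by_contra h
    exact hind u v a huv (fun e => hba (e ▸ hbu)) (fun e => hba (e ▸ hbv)) h
      (fun h' => hau h'.symm) (fun h' => hav h'.symm)
  by_cases hc : ∃ c, B.Adj a c ∧ B.Adj b c
  · obtain ⟨c, hac, hbc⟩ := hc
    have hca : B.Adj c a := hac.symm
    have hcb : B.Adj c b := hbc.symm
    have haa : ¬ B.Adj a a := B.loopless.irrefl a
    have hbb : ¬ B.Adj b b := B.loopless.irrefl b
    have hcc : ¬ B.Adj c c := B.loopless.irrefl c
    have hcu : ∀ w, B.Adj a w → B.Adj b w → w = c := fun w h1 h2 =>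
      hcn a b hne hab w c h1 h2 hac hbc
    have hclass : ∀ w, w = a ∨ w = b ∨ w = c ∨ (B.Adj a w ∧ ¬ B.Adj b w) ∨
        (B.Adj b w ∧ ¬ B.Adj a w) := by
      intro w
      by_cases h1 : w = a
      · exact Or.inl h1
      by_cases h2 : w = b
      · exact Or.inr (Or.inl h2)
      by_cases h3 : B.Adj a w <;> by_cases h4 : B.Adj b w
      · exact Or.inr (Or.inr (Or.inl (hcu w h3 h4)))
      · exact Or.inr (Or.inr (Or.inr (Or.inl ⟨h3, h4⟩)))
      · exact Or.inr (Or.inr (Or.inr (Or.inr ⟨h4, h3⟩)))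
      · rcases hclass0 w h1 h2 with h | h
        exacts [absurd h h3, absurd h h4]
    have L2 : ∀ u w w', B.Adj a u → ¬ B.Adj b u → B.Adj b w → B.Adj b w' →
        B.Adj u w → B.Adj u w' → w = w' := by
      intro u w w' hau hbu hbw hbw' h1 h2
      exact hcn u b (fun e => hab (e ▸ hau)) (fun h => hbu h.symm) w w' h1 hbw h2 hbw'
    have L2' : ∀ v w w', B.Adj b v → ¬ B.Adj a v → B.Adj a w → B.Adj a w' →
        B.Adj v w → B.Adj v w' → w = w' := by
      intro v w w' hbv hav haw haw' h1 h2
      exact hcn v a (fun e => hba (e ▸ hbv)) (fun h => hav h.symm) w w' h1 haw h2 haw'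
    have L1 : ∀ u u', B.Adj a u → ¬ B.Adj b u → B.Adj a u' → ¬ B.Adj b u' →
        B.Adj c u → B.Adj c u' := by
      intro u u' hau hbu hau' hbu' hcu0
      by_cases huu' : u = u'
      · exact huu' ▸ hcu0
      by_contra hncu'
      have hcne : c ≠ u' := fun e => hbu' (e ▸ hbc)
      have := hcn c u' hcne hncu' a u hca hau'.symm hcu0
        (hAcl u u' hau hbu hau' hbu' huu').symm
      exact hau.ne this
    have L1' : ∀ v v', B.Adj b v → ¬ B.Adj a v → B.Adj b v' → ¬ B.Adj a v' →
        B.Adj c v → B.Adj c v' := by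
      intro v v' hbv hav hbv' hav' hcv0
      by_cases hvv' : v = v'
      · exact hvv' ▸ hcv0
      by_contra hncv'
      have hcne : c ≠ v' := fun e => hav' (e ▸ hac)
      have := hcn c v' hcne hncv' b v hcb hbv'.symm hcv0
        (hBcl v v' hbv hav hbv' hav' hvv').symm
      exact hbv.ne this
    by_cases hA : ∀ u, B.Adj a u → ¬ B.Adj b u → B.Adj c u
    · by_cases hB : ∀ v, B.Adj b v → ¬ B.Adj a v → B.Adj c v
      · -- short dumbbell
        have hnoAB : ∀ u v, B.Adj a u → ¬ B.Adj b u → B.Adj b v → ¬ B.Adj a v →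
            ¬ B.Adj u v := by
          intro u v hau hbu hbv hav huv
          have : v = c := L2 u v c hau hbu hbv hbc huv (hA u hau hbu).symm
          exact hav (this ▸ hac)
        refine Or.inr (Or.inr (Or.inl ⟨{w | w = a ∨ w = c ∨ (B.Adj a w ∧ ¬ B.Adj b w)},
          {w | w = b ∨ w = c ∨ (B.Adj b w ∧ ¬ B.Adj a w)}, c, ?_, ?_, ?_⟩))
        · ext w
          simp only [Set.mem_union, Set.mem_setOf_eq, Set.mem_univ, iff_true]
          rcases hclass w with rfl | rfl | rfl | h | h
          · exact Or.inl (Or.inl rfl)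
          · exact Or.inr (Or.inl rfl)
          · exact Or.inl (Or.inr (Or.inl rfl))
          · exact Or.inl (Or.inr (Or.inr h))
          · exact Or.inr (Or.inr (Or.inr h))
        · ext w
          simp only [Set.mem_inter_iff, Set.mem_setOf_eq, Set.mem_singleton_iff]
          constructor
          · rintro ⟨h1, h2⟩
            rcases h1 with rfl | rfl | h1
            · rcases h2 with h2 | h2 | h2
              · exact absurd h2 hne
              · exact h2
              · exact absurd h2.1 hba
            · rfl
            · rcases h2 with rfl | rfl | h2
              · exact absurd h1.1 hab
              · rfl
              · exact absurd h2.1 h1.2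
          · rintro rfl
            exact ⟨Or.inr (Or.inl rfl), Or.inr (Or.inl rfl)⟩
        · intro u v
          constructor
          · intro h
            have h' := h.symm
            refine ⟨h.ne, ?_⟩
            simp only [Set.mem_setOf_eq]
            rcases hclass u with rfl | rfl | rfl | hu | hu <;>
              rcases hclass v with rfl | rfl | rfl | hv | hv <;>
              first
                | exact absurd h (hnoAB _ _ hu.1 hu.2 hv.1 hv.2)
                | exact absurd h' (hnoAB _ _ hv.1 hv.2 hu.1 hu.2)
                | (clear hconn hind hcn hclass0 hAcl hBcl hcu hclass L1 L1' L2 L2' hnoAB hA hB; tauto)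
          · rintro ⟨hne', hm⟩
            simp only [Set.mem_setOf_eq] at hm
            rcases hm with ⟨hu, hv⟩ | ⟨hu, hv⟩ <;>
              rcases hu with rfl | rfl | hu <;> rcases hv with rfl | rfl | hv <;>
              first
                | exact absurd rfl hne'
                | exact hac
                | exact hca
                | exact hbc
                | exact hcb
                | exact hu.1.symm
                | exact hv.1
                | exact (hA u hu.1 hu.2).symm
                | exact hA v hv.1 hv.2
                | exact (hB u hu.1 hu.2).symm
                | exact hB v hv.1 hv.2
                | exact hAcl u v hu.1 hu.2 hv.1 hv.2 hne'
                | exact hBcl u v hu.1 hu.2 hv.1 hv.2 hne'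
      · -- dumbbell, cross edge c-b
        push_neg at hB
        obtain ⟨v0, hbv0, hav0, hncv0⟩ := hB
        have hcB : ∀ v, B.Adj b v → ¬ B.Adj a v → ¬ B.Adj c v :=
          fun v h1 h2 h3 => hncv0 (L1' v v0 h1 h2 hbv0 hav0 h3)
        have hnoAB : ∀ u v, B.Adj a u → ¬ B.Adj b u → B.Adj b v → ¬ B.Adj a v →
            ¬ B.Adj u v := by
          intro u v hau hbu hbv hav huv
          have : v = c := L2 u v c hau hbu hbv hbc huv (hA u hau hbu).symm
          exact hav (this ▸ hac)
        refine Or.inr (Or.inl ⟨{w | w = a ∨ w = c ∨ (B.Adj a w ∧ ¬ B.Adj b w)},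
          {w | w = b ∨ (B.Adj b w ∧ ¬ B.Adj a w)}, c, b, ?_, ?_,
          Or.inr (Or.inl rfl), Or.inl rfl, ?_⟩)
        · ext w
          simp only [Set.mem_union, Set.mem_setOf_eq, Set.mem_univ, iff_true]
          rcases hclass w with rfl | rfl | rfl | h | h
          · exact Or.inl (Or.inl rfl)
          · exact Or.inr (Or.inl rfl)
          · exact Or.inl (Or.inr (Or.inl rfl))
          · exact Or.inl (Or.inr (Or.inr h))
          · exact Or.inr (Or.inr h)
        · rw [Set.disjoint_left]
          rintro w h1 h2
          simp only [Set.mem_setOf_eq] at h1 h2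
          rcases h1 with rfl | rfl | h1 <;> rcases h2 with rfl | h2
          · exact hne rfl
          · exact hba h2.1
          · exact hab hac
          · exact h2.2 hac
          · exact hab h1.1
          · exact h1.2 h2.1
        · intro u v
          constructor
          · intro h
            have h' := h.symm
            refine ⟨h.ne, ?_⟩
            simp only [Set.mem_setOf_eq]
            rcases hclass u with rfl | rfl | rfl | hu | hu <;>
              rcases hclass v with rfl | rfl | rfl | hv | hv <;>
              first
                | exact absurd h (hnoAB _ _ hu.1 hu.2 hv.1 hv.2)
                | exact absurd h' (hnoAB _ _ hv.1 hv.2 hu.1 hu.2)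
                | exact absurd h (hcB _ hv.1 hv.2)
                | exact absurd h' (hcB _ hu.1 hu.2)
                | (clear hconn hind hcn hclass0 hAcl hBcl hcu hclass L1 L1' L2 L2' hnoAB hcB hA; tauto)
          · rintro ⟨hne', hm⟩
            simp only [Set.mem_setOf_eq] at hm
            rcases hm with ⟨hu, hv⟩ | ⟨hu, hv⟩ | ⟨rfl, rfl⟩ | ⟨rfl, rfl⟩
            · rcases hu with rfl | rfl | hu <;> rcases hv with rfl | rfl | hv <;>
                first
                  | exact absurd rfl hne'
                  | exact hac
                  | exact hca
                  | exact hu.1.symm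
                  | exact hv.1
                  | exact (hA u hu.1 hu.2).symm
                  | exact hA v hv.1 hv.2
                  | exact hAcl u v hu.1 hu.2 hv.1 hv.2 hne'
            · rcases hu with rfl | hu <;> rcases hv with rfl | hv <;>
                first
                  | exact absurd rfl hne'
                  | exact hu.1.symm
                  | exact hv.1
                  | exact hBcl u v hu.1 hu.2 hv.1 hv.2 hne'
            · exact hcb
            · exact hbc
    · by_cases hB : ∀ v, B.Adj b v → ¬ B.Adj a v → B.Adj c v
      · -- dumbbell, cross edge a-c
        push_neg at hA
        obtain ⟨u0, hau0, hbu0, hncu0⟩ := hA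
        have hcA : ∀ u, B.Adj a u → ¬ B.Adj b u → ¬ B.Adj c u :=
          fun u h1 h2 h3 => hncu0 (L1 u u0 h1 h2 hau0 hbu0 h3)
        have hnoAB : ∀ u v, B.Adj a u → ¬ B.Adj b u → B.Adj b v → ¬ B.Adj a v →
            ¬ B.Adj u v := by
          intro u v hau hbu hbv hav huv
          have : u = c := L2' v u c hbv hav hau hac huv.symm (hB v hbv hav).symm
          exact hbu (this ▸ hbc)
        refine Or.inr (Or.inl ⟨{w | w = a ∨ (B.Adj a w ∧ ¬ B.Adj b w)},
          {w | w = b ∨ w = c ∨ (B.Adj b w ∧ ¬ B.Adj a w)}, a, c, ?_, ?_,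
          Or.inl rfl, Or.inr (Or.inl rfl), ?_⟩)
        · ext w
          simp only [Set.mem_union, Set.mem_setOf_eq, Set.mem_univ, iff_true]
          rcases hclass w with rfl | rfl | rfl | h | h
          · exact Or.inl (Or.inl rfl)
          · exact Or.inr (Or.inl rfl)
          · exact Or.inr (Or.inr (Or.inl rfl))
          · exact Or.inl (Or.inr h)
          · exact Or.inr (Or.inr (Or.inr h))
        · rw [Set.disjoint_left]
          rintro w h1 h2
          simp only [Set.mem_setOf_eq] at h1 h2
          rcases h1 with rfl | h1 <;> rcases h2 with rfl | rfl | h2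
          · exact hne rfl
          · exact haa hac
          · exact hba h2.1
          · exact hab h1.1
          · exact h1.2 hbc
          · exact h1.2 h2.1
        · intro u v
          constructor
          · intro h
            have h' := h.symm
            refine ⟨h.ne, ?_⟩
            simp only [Set.mem_setOf_eq]
            rcases hclass u with rfl | rfl | rfl | hu | hu <;>
              rcases hclass v with rfl | rfl | rfl | hv | hv <;>
              first
                | exact absurd h (hnoAB _ _ hu.1 hu.2 hv.1 hv.2)
                | exact absurd h' (hnoAB _ _ hv.1 hv.2 hu.1 hu.2)
                | exact absurd h' (hcA _ hu.1 hu.2)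
                | exact absurd h (hcA _ hv.1 hv.2)
                | (clear hconn hind hcn hclass0 hAcl hBcl hcu hclass L1 L1' L2 L2' hnoAB hcA hB; tauto)
          · rintro ⟨hne', hm⟩
            simp only [Set.mem_setOf_eq] at hm
            rcases hm with ⟨hu, hv⟩ | ⟨hu, hv⟩ | ⟨rfl, rfl⟩ | ⟨rfl, rfl⟩
            · rcases hu with rfl | hu <;> rcases hv with rfl | hv <;>
                first
                  | exact absurd rfl hne'
                  | exact hu.1.symm
                  | exact hv.1
                  | exact hAcl u v hu.1 hu.2 hv.1 hv.2 hne'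
            · rcases hu with rfl | rfl | hu <;> rcases hv with rfl | rfl | hv <;>
                first
                  | exact absurd rfl hne'
                  | exact hbc
                  | exact hcb
                  | exact hu.1.symm
                  | exact hv.1
                  | exact (hB u hu.1 hu.2).symm
                  | exact hB v hv.1 hv.2
                  | exact hBcl u v hu.1 hu.2 hv.1 hv.2 hne'
            · exact hac
            · exact hca
      · -- five cycle
        push_neg at hA hB
        obtain ⟨u0, hau0, hbu0, hncu0⟩ := hA
        obtain ⟨v0, hbv0, hav0, hncv0⟩ := hB
        have hcA : ∀ u, B.Adj a u → ¬ B.Adj b u → ¬ B.Adj c u :=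
          fun u h1 h2 h3 => hncu0 (L1 u u0 h1 h2 hau0 hbu0 h3)
        have hcB : ∀ v, B.Adj b v → ¬ B.Adj a v → ¬ B.Adj c v :=
          fun v h1 h2 h3 => hncv0 (L1' v v0 h1 h2 hbv0 hav0 h3)
        have hAB : ∀ u v, B.Adj a u → ¬ B.Adj b u → B.Adj b v → ¬ B.Adj a v → B.Adj u v := by
          intro u v hau hbu hbv hav
          by_contra huv
          exact hind c u v (fun e => hbu (e ▸ hbc)) (fun e => hav (e ▸ hac))
            (fun e => hav (e ▸ hau)) (hcA u hau hbu) (hcB v hbv hav) huv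
        have huv0 : B.Adj u0 v0 := hAB u0 v0 hau0 hbu0 hbv0 hav0
        have hAeq : ∀ u, B.Adj a u → ¬ B.Adj b u → u = u0 := fun u h1 h2 =>
          L2' v0 u u0 hbv0 hav0 h1 hau0 (hAB u v0 h1 h2 hbv0 hav0).symm huv0.symm
        have hBeq : ∀ v, B.Adj b v → ¬ B.Adj a v → v = v0 := fun v h1 h2 =>
          L2 u0 v v0 hau0 hbu0 h1 hbv0 (hAB u0 v hau0 hbu0 h1 h2) huv0
        -- distinctness
        have d1 : a ≠ u0 := hau0.ne
        have d1' : u0 ≠ a := d1.symm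
        have d2 : a ≠ v0 := by rintro rfl; exact hba hbv0
        have d2' : v0 ≠ a := d2.symm
        have d3' : b ≠ a := hne.symm
        have d4 : a ≠ c := hac.ne
        have d4' : c ≠ a := d4.symm
        have d5 : u0 ≠ v0 := by rintro rfl; exact hav0 hau0
        have d5' : v0 ≠ u0 := d5.symm
        have d6 : u0 ≠ b := by rintro rfl; exact hab hau0
        have d6' : b ≠ u0 := d6.symm
        have d7 : u0 ≠ c := by rintro rfl; exact hbu0 hbc
        have d7' : c ≠ u0 := d7.symm
        have d8 : v0 ≠ b := by rintro rfl; exact hbb hbv0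
        have d8' : b ≠ v0 := d8.symm
        have d9 : v0 ≠ c := by rintro rfl; exact hav0 hac
        have d9' : c ≠ v0 := d9.symm
        have d10 : b ≠ c := hbc.ne
        have d10' : c ≠ b := d10.symm
        -- adjacency facts
        have e1 : B.Adj a u0 := hau0
        have e1' : B.Adj u0 a := hau0.symm
        have e2 : B.Adj u0 v0 := huv0
        have e2' : B.Adj v0 u0 := huv0.symm
        have e3 : B.Adj v0 b := hbv0.symm
        have e3' : B.Adj b v0 := hbv0
        have e4 : B.Adj b c := hbc
        have e4' : B.Adj c b := hcb
        have e5 : B.Adj c a := hca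
        have e5' : B.Adj a c := hac
        have n1 : ¬ B.Adj a v0 := hav0
        have n1' : ¬ B.Adj v0 a := fun h => hav0 h.symm
        have n2 : ¬ B.Adj a b := hab
        have n2' : ¬ B.Adj b a := hba
        have n3 : ¬ B.Adj u0 b := fun h => hbu0 h.symm
        have n3' : ¬ B.Adj b u0 := hbu0
        have n4 : ¬ B.Adj u0 c := fun h => hncu0 h.symm
        have n4' : ¬ B.Adj c u0 := hncu0
        have n5 : ¬ B.Adj v0 c := fun h => hncv0 h.symm
        have n5' : ¬ B.Adj c v0 := hncv0
        have nu0 : ¬ B.Adj u0 u0 := B.loopless.irrefl u0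
        have nv0 : ¬ B.Adj v0 v0 := B.loopless.irrefl v0
        refine Or.inr (Or.inr (Or.inr ⟨![a, u0, v0, b, c], ⟨?_, ?_⟩, ?_⟩))
        · intro i j hij
          fin_cases i <;> fin_cases j <;>
            simp only [Matrix.cons_val_zero, Matrix.cons_val_one, Matrix.head_cons,
              Matrix.cons_val_two, Matrix.tail_cons, Matrix.cons_val_three,
              Matrix.cons_val_four, Fin.mk_zero, Fin.mk_one] at hij <;>
            first
              | rfl
              | exact absurd hij d1 | exact absurd hij d1' | exact absurd hij d2
              | exact absurd hij d2' | exact absurd hij d3 | exact absurd hij d3'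
              | exact absurd hij d4 | exact absurd hij d4' | exact absurd hij d5
              | exact absurd hij d5' | exact absurd hij d6 | exact absurd hij d6'
              | exact absurd hij d7 | exact absurd hij d7' | exact absurd hij d8
              | exact absurd hij d8' | exact absurd hij d9 | exact absurd hij d9'
              | exact absurd hij d10 | exact absurd hij d10'
              | exact absurd hij hne | exact absurd hij hne.symm
        · intro w
          rcases hclass w with rfl | rfl | rfl | h | h
          · exact ⟨0, rfl⟩
          · exact ⟨3, rfl⟩
          · exact ⟨4, rfl⟩
          · exact ⟨1, (hAeq w h.1 h.2).symm⟩
          · exact ⟨2, (hBeq w h.1 h.2).symm⟩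
        · intro i j
          clear hconn hind hcn hclass0 hAcl hBcl hcu hclass L1 L1' L2 L2' hcA hcB hAB hAeq hBeq
          fin_cases i <;> fin_cases j <;>
            simp only [Matrix.cons_val_zero, Matrix.cons_val_one, Matrix.head_cons,
              Matrix.cons_val_two, Matrix.tail_cons, Matrix.cons_val_three,
              Matrix.cons_val_four] <;>
            (try simp_all [Fin.ext_iff]) <;> decide

  -- Case: no common neighbor of a and b: dumbbell
  push_neg at hc
  set K : Set V := {w | w = a ∨ B.Adj a w} with hK
  set L : Set V := {w | w = b ∨ B.Adj b w} with hL
  have hcover : ∀ w, w ∈ K ∨ w ∈ L := by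
    intro w
    by_cases h1 : w = a
    · exact Or.inl (Or.inl h1)
    by_cases h2 : w = b
    · exact Or.inr (Or.inl h2)
    rcases hclass0 w h1 h2 with h | h
    · exact Or.inl (Or.inr h)
    · exact Or.inr (Or.inr h)
  have hdisj : Disjoint K L := by
    rw [Set.disjoint_left]
    rintro w (rfl | h1) (rfl | h2)
    · exact hne rfl
    · exact hba h2
    · exact hab h1
    · exact hc w h1 h2
  have hbK : b ∉ K := by rintro (rfl | h); exacts [hne rfl, hab h]
  obtain ⟨p⟩ := hconn.preconnected a b
  obtain ⟨x, y, hxK, hyK, hxy⟩ := cross_edge K p (Or.inl rfl) hbK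
  have hyL : y ∈ L := (hcover y).resolve_left hyK
  have hax : B.Adj a x := by
    rcases hxK with rfl | h
    · exfalso
      rcases hyL with rfl | h
      · exact hab hxy
      · exact hc y hxy h
    · exact h
  have hby : B.Adj b y := by
    rcases hyL with rfl | h
    · exfalso
      exact hc x hax (hxy.symm)
    · exact h
  have hay : ¬ B.Adj a y := fun h => hc y h hby
  have hbx : ¬ B.Adj b x := hc x hax
  -- uniqueness of cross edge
  have huniq : ∀ u v, B.Adj a u → B.Adj b v → B.Adj u v → u = x ∧ v = y := by
    intro u v hau hbv huv
    have hbu : ¬ B.Adj b u := hc u hau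
    have hav : ¬ B.Adj a v := fun h => hc v h hbv
    have hub : u ≠ b := fun e => hab (e ▸ hau)
    have hunb : ¬ B.Adj u b := fun h => hbu h.symm
    by_cases hux : u = x
    · subst hux
      exact ⟨rfl, hcn u b hub hunb v y huv hbv hxy hby⟩
    exfalso
    by_cases hvy : v = y
    · subst hvy
      have hva : v ≠ a := fun e => hba (e ▸ hbv)
      have hvna : ¬ B.Adj v a := fun h => hav h.symm
      exact hux (hcn v a hva hvna u x huv.symm hau hxy.symm hax)
    · have hnuy : ¬ B.Adj u y := fun h => hvy (hcn u b hub hunb v y huv hbv h hby)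
      have huy : u ≠ y := fun e => hay (e ▸ hau)
      have h1 : B.Adj u x := hAcl u x hau hbu hax hbx hux
      have h2 : B.Adj y x := hxy.symm
      have h3 : B.Adj y v := (hBcl v y hbv hav hby hay hvy).symm
      have := hcn u y huy hnuy x v h1 h2 huv h3
      exact hav (this ▸ hax)
  refine Or.inr (Or.inl ⟨K, L, x, y, ?_, hdisj, hxK, hyL, ?_⟩)
  · ext w; simpa using hcover w
  intro u v
  constructor
  · intro h
    refine ⟨h.ne, ?_⟩
    rcases hcover u with hu | hu <;> rcases hcover v with hv | hv
    · exact Or.inl ⟨hu, hv⟩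
    · -- u in K, v in L
      have hau : B.Adj a u := by
        rcases hu with rfl | h'
        · exfalso
          rcases hv with rfl | h'
          · exact hab h
          · exact hc v h h'
        · exact h'
      have hbv : B.Adj b v := by
        rcases hv with rfl | h'
        · exact absurd h.symm (hc u hau)
        · exact h'
      exact Or.inr (Or.inr (Or.inl (huniq u v hau hbv h)))
    · have hav : B.Adj a v := by
        rcases hv with rfl | h'
        · exfalso
          rcases hu with rfl | h'
          · exact hba h
          · exact hc u h.symm h'
        · exact h'
      have hbu : B.Adj b u := by
        rcases hu with rfl | h'
        · exact absurd h (hc v hav)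
        · exact h'
      obtain ⟨h1, h2⟩ := huniq v u hav hbu h.symm
      exact Or.inr (Or.inr (Or.inr ⟨h2, h1⟩))
    · exact Or.inr (Or.inl ⟨hu, hv⟩)
  · rintro ⟨hne', (⟨hu, hv⟩ | ⟨hu, hv⟩ | ⟨rfl, rfl⟩ | ⟨rfl, rfl⟩)⟩
    · rcases hu with rfl | hu <;> rcases hv with rfl | hv
      · exact absurd rfl hne'
      · exact hv
      · exact hu.symm
      · exact hAcl u v hu (hc u hu) hv (hc v hv) hne'
    · rcases hu with rfl | hu <;> rcases hv with rfl | hv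
      · exact absurd rfl hne'
      · exact hv
      · exact hu.symm
      · exact hBcl u v hu (fun h => hc u h hu) hv (fun h => hc v h hv) hne'
    · exact hxy
    · exact hxy.symm
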